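/- arXiv:2212.01690 — 2 statements merged into one kernel-verified Lean document; each statement's English description precedes it below -/
import Mathlib

section
/- Let B be a separable Banach space, (ε_n)_{n∈ℤ} an i.i.d. sequence of B-valued random variables in L^p (p ≥ 1), and (ρ_n)_{n∈ℤ} an i.i.d. sequence of bounded linear operators on B, independent of (ε_n), with E‖ρ_0‖^p < 1. Then the series X_n = μ + Σ_{j=0}^∞ A_{n,j} ε_{n-j}, where A_{n,0} = I and A_{n,j} = ρ_n ∘ ⋯ ∘ ρ_{n-j+1} for j ≥ 1, converges absolutely almost surely and in L^p_B. -/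
open MeasureTheory Filter Topology ProbabilityTheory
open scoped ENNReal NNReal
noncomputable section

/-- An i.i.d. sequence indexed by `ℤ`. -/
def IIDZ {Ω : Type*} [MeasurableSpace Ω] {E : Type*} [MeasurableSpace E]
    (X : ℤ → Ω → E) (μ : Measure Ω) : Prop :=
  iIndepFun X μ ∧ ∀ n, IdentDistrib (X n) (X 0) μ μ

/-- Strict stationarity of a `ℤ`-indexed process: the law of the whole path is
shift invariant. -/
def StrictlyStationary {Ω : Type*} [MeasurableSpace Ω] {E : Type*} [MeasurableSpace E]
    (X : ℤ → Ω → E) (μ : Measure Ω) : Prop :=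
  ∀ k : ℤ, IdentDistrib (fun ω (n : ℤ) => X n ω) (fun ω (n : ℤ) => X (n + k) ω) μ μ

/-- `prodOp ρ n j = ρ_n ∘ ⋯ ∘ ρ_{n-j+1}` (random products of operators), with
`prodOp ρ n 0 = I`. -/
def prodOp {Ω : Type*} {B : Type*} [NormedAddCommGroup B] [NormedSpace ℝ B]
    (ρ : ℤ → Ω → B →L[ℝ] B) : ℤ → ℕ → Ω → B →L[ℝ] B
  | _, 0, _ => ContinuousLinearMap.id ℝ B
  | n, (j+1), ω => (ρ n ω).comp (prodOp ρ (n-1) j ω)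

/-- The (cross-)covariance operator `C_{X,Y}(x*) = E (x*(X) • Y)`, as a map from the
dual of `B` to `B`. -/
def covFn {Ω : Type*} [MeasurableSpace Ω] {B : Type*} [NormedAddCommGroup B]
    [NormedSpace ℝ B] [CompleteSpace B] (μ : Measure Ω) (X Y : Ω → B) :
    (B →L[ℝ] ℝ) → B :=
  fun f => ∫ ω, f (X ω) • Y ω ∂μ

/-- The nuclear norm of a map `T : B* → B`: the infimum of `∑ ‖x_j**‖ ‖y_j‖` over all
nuclear representations `T x* = ∑ x_j**(x*) • y_j`. -/
def nuclearNorm {B : Type*} [NormedAddCommGroup B] [NormedSpace ℝ B]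
    (T : (B →L[ℝ] ℝ) → B) : ℝ :=
  sInf { c | ∃ (g : ℕ → ((B →L[ℝ] ℝ) →L[ℝ] ℝ)) (y : ℕ → B),
    Summable (fun j => ‖g j‖ * ‖y j‖) ∧ c = ∑' j, ‖g j‖ * ‖y j‖ ∧
    ∀ f, T f = ∑' j, g j f • y j }

/-- `B` is `r`-smooth: there is an equivalent norm `N` such that
`sup_{t>0} t^{-r} sup { N(x+ty) + N(x-ty) - 2 : N x = N y = 1 } < ∞`. -/
def RSmooth (B : Type*) [NormedAddCommGroup B] [NormedSpace ℝ B] (r : ℝ) : Prop :=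
  ∃ N : B → ℝ, (∀ x y : B, N (x + y) ≤ N x + N y) ∧
    (∀ (a : ℝ) (x : B), N (a • x) = |a| * N x) ∧
    (∃ c C : ℝ, 0 < c ∧ ∀ x : B, c * ‖x‖ ≤ N x ∧ N x ≤ C * ‖x‖) ∧
    ∃ K : ℝ, ∀ t : ℝ, 0 < t → ∀ x y : B, N x = 1 → N y = 1 →
      N (x + t • y) + N (x - t • y) - 2 ≤ K * t ^ r

variable {Ω : Type*} [MeasurableSpace Ω]
  {B : Type*} [NormedAddCommGroup B] [NormedSpace ℝ B] [CompleteSpace B]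
  [TopologicalSpace.SeparableSpace B] [MeasurableSpace B] [BorelSpace B]
  [MeasurableSpace (B →L[ℝ] B)] [BorelSpace (B →L[ℝ] B)]

open scoped ENNReal NNReal in
lemma prodOp_norm_le (ρ : ℤ → Ω → B →L[ℝ] B) :
    ∀ (j : ℕ) (n : ℤ) (ω : Ω), ‖prodOp ρ n j ω‖ ≤ ∏ i ∈ Finset.range j, ‖ρ (n - i) ω‖
  | 0, n, ω => by simpa [prodOp] using ContinuousLinearMap.norm_id_le
  | (j+1), n, ω => by
    have h := prodOp_norm_le ρ j (n-1) ω
    calc ‖prodOp ρ n (j+1) ω‖ ≤ ‖ρ n ω‖ * ‖prodOp ρ (n-1) j ω‖ :=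
          ContinuousLinearMap.opNorm_comp_le (ρ n ω) (prodOp ρ (n-1) j ω)
      _ ≤ ‖ρ n ω‖ * ∏ i ∈ Finset.range j, ‖ρ (n - 1 - i) ω‖ := by
          exact mul_le_mul_of_nonneg_left h (norm_nonneg _)
      _ = ∏ i ∈ Finset.range (j+1), ‖ρ (n - i) ω‖ := by
          rw [Finset.prod_range_succ']
          simp only [Nat.cast_zero, sub_zero]
          rw [mul_comm]
          congr 1
          refine Finset.prod_congr rfl fun i _ => ?_
          congr 2
          push_cast
          ring

lemma measurable_prodOp_apply (ρ : ℤ → Ω → B →L[ℝ] B) (hρ : ∀ k, Measurable (ρ k)) :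
    ∀ (j : ℕ) (n : ℤ) (X : Ω → B), Measurable X →
      Measurable fun ω => prodOp ρ n j ω (X ω)
  | 0, n, X, hX => by simpa [prodOp] using hX
  | (j+1), n, X, hX => by
    haveI : SecondCountableTopology B := UniformSpace.secondCountable_of_separable B
    have h := measurable_prodOp_apply ρ hρ j (n-1) X hX
    show Measurable fun ω => (ρ n ω) (prodOp ρ (n-1) j ω (X ω))
    exact isBoundedBilinearMap_apply.continuous.measurable2 (hρ n) h

lemma integral_finset_prod_of_iIndep (μ : Measure Ω) [IsProbabilityMeasure μ]
    (g : ℤ → Ω → ℝ) (hind : iIndepFun g μ)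
    (hm : ∀ k, Measurable (g k)) (hi : ∀ k, Integrable (g k) μ) (s : Finset ℤ) :
    Integrable (fun ω => ∏ k ∈ s, g k ω) μ ∧
      ∫ ω, ∏ k ∈ s, g k ω ∂μ = ∏ k ∈ s, ∫ ω, g k ω ∂μ := by
  classical
  induction s using Finset.induction_on with
  | empty => simp
  | @insert a s ha ih =>
    have hIF : IndepFun (∏ k ∈ s, g k) (g a) μ :=
      hind.indepFun_finsetProd_of_notMem hm ha
    have hprod_eq : (∏ k ∈ s, g k) = fun ω => ∏ k ∈ s, g k ω := by
      funext ω; simp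
    have hIF' : IndepFun (fun ω => ∏ k ∈ s, g k ω) (g a) μ := by rwa [hprod_eq] at hIF
    have hmul : Integrable ((fun ω => ∏ k ∈ s, g k ω) * g a) μ :=
      hIF'.integrable_mul ih.1 (hi a)
    have heq : (fun ω => ∏ k ∈ insert a s, g k ω) =
        (fun ω => ∏ k ∈ s, g k ω) * g a := by
      funext ω; simp [Finset.prod_insert ha, mul_comm]
    constructor
    · rw [heq]; exact hmul
    · have hint := hIF'.integral_mul_eq_mul_integral ih.1.aestronglyMeasurable (hi a).aestronglyMeasurable
      rw [heq]
      rw [Finset.prod_insert ha, hint, ih.2, mul_comm]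

set_option maxHeartbeats 2000000 in
/-- Existence: the series `X_n = μ₀ + ∑_{j≥0} A_{n,j} ε_{n-j}` converges absolutely a.s.
and in `L^p`. -/
theorem brca_series_converges
    (μ : Measure Ω) [IsProbabilityMeasure μ] (μ0 : B)
    (ρ : ℤ → Ω → B →L[ℝ] B) (ε : ℤ → Ω → B)
    (hρmeas : ∀ n, Measurable (ρ n)) (hεmeas : ∀ n, Measurable (ε n))
    (hρiid : IIDZ ρ μ) (hεiid : IIDZ ε μ)
    (hindep : IndepFun (fun ω (n : ℤ) => ρ n ω) (fun ω (n : ℤ) => ε n ω) μ)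
    (p : ℝ) (hp : 1 ≤ p)
    (hεp : Integrable (fun ω => ‖ε 0 ω‖ ^ p) μ)
    (hρp : Integrable (fun ω => ‖ρ 0 ω‖ ^ p) μ)
    (hρlt : ∫ ω, ‖ρ 0 ω‖ ^ p ∂μ < 1) :
    ∀ n : ℤ,
      (∀ᵐ ω ∂μ, Summable (fun j : ℕ => ‖prodOp ρ n j ω (ε (n - j) ω)‖)) ∧
      ∃ S : Ω → B,
        Tendsto (fun m : ℕ =>
            eLpNorm (fun ω =>
              (μ0 + ∑ j ∈ Finset.range m, prodOp ρ n j ω (ε (n - j) ω)) - S ω)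
            (ENNReal.ofReal p) μ) atTop (𝓝 0) := by
  haveI : SecondCountableTopology B := UniformSpace.secondCountable_of_separable B
  intro n
  have hp0 : (0:ℝ) < p := lt_of_lt_of_le one_pos hp
  set q : ℝ≥0∞ := ENNReal.ofReal p with hqdef
  have hq0 : q ≠ 0 := (ENNReal.ofReal_pos.2 hp0).ne'
  have hqt : q ≠ ∞ := ENNReal.ofReal_ne_top
  have hq1 : (1:ℝ≥0∞) ≤ q := by
    rw [hqdef, ← ENNReal.ofReal_one]; exact ENNReal.ofReal_le_ofReal hp
  have hqr : q.toReal = p := ENNReal.toReal_ofReal hp0.le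
  set a : ℝ := ∫ ω, ‖ρ 0 ω‖ ^ p ∂μ with hadef
  set c : ℝ := ∫ ω, ‖ε 0 ω‖ ^ p ∂μ with hcdef
  have ha0 : 0 ≤ a := integral_nonneg fun ω => Real.rpow_nonneg (norm_nonneg _) _
  have hc0 : 0 ≤ c := integral_nonneg fun ω => Real.rpow_nonneg (norm_nonneg _) _
  have hpowm : Measurable fun x : ℝ => x ^ p := (Real.continuous_rpow_const hp0.le).measurable
  set T : ℕ → Ω → B := fun j ω => prodOp ρ n j ω (ε (n - j) ω) with hTdef
  have hTm : ∀ j, Measurable (T j) := fun j =>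
    measurable_prodOp_apply ρ hρmeas j n _ (hεmeas _)
  set g : ℤ → Ω → ℝ := fun k ω => ‖ρ k ω‖ ^ p with hgdef
  have hgm : ∀ k, Measurable (g k) := fun k => hpowm.comp (hρmeas k).norm
  have hgind : iIndepFun g μ :=
    hρiid.1.comp (fun _ x => ‖x‖ ^ p) fun _ => hpowm.comp measurable_norm
  have hgid : ∀ k, IdentDistrib (g k) (g 0) μ μ := fun k =>
    (hρiid.2 k).comp (hpowm.comp measurable_norm)
  have hgint : ∀ k, Integrable (g k) μ := fun k => (hgid k).integrable_iff.2 hρp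
  have hgval : ∀ k, ∫ ω, g k ω ∂μ = a := fun k => (hgid k).integral_eq
  set F : ℕ → Ω → ℝ := fun j ω => ∏ i ∈ Finset.range j, ‖ρ (n - i) ω‖ ^ p with hFdef
  set G : ℕ → Ω → ℝ := fun j ω => ‖ε (n - j) ω‖ ^ p with hGdef
  have hFfact : ∀ j : ℕ, Integrable (F j) μ ∧ ∫ ω, F j ω ∂μ = a ^ j := by
    intro j
    classical
    have hinj : ∀ x ∈ Finset.range j, ∀ y ∈ Finset.range j,
        (fun i : ℕ => n - (i:ℤ)) x = (fun i : ℕ => n - (i:ℤ)) y → x = y := by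
      intro x _ y _ h
      simp only at h
      omega
    set s : Finset ℤ := (Finset.range j).image (fun i : ℕ => n - (i:ℤ)) with hsdef
    have hFs : ∀ ω, F j ω = ∏ k ∈ s, g k ω := by
      intro ω
      simp only [hFdef, hgdef, hsdef]
      rw [Finset.prod_image hinj]
    have hcard : s.card = j := by
      rw [hsdef, Finset.card_image_of_injective _ (fun x y h => by omega), Finset.card_range]
    obtain ⟨h1, h2⟩ := integral_finset_prod_of_iIndep μ g hgind hgm hgint s
    constructor
    · exact h1.congr (Filter.Eventually.of_forall fun ω => (hFs ω).symm)
    · calc ∫ ω, F j ω ∂μ = ∫ ω, ∏ k ∈ s, g k ω ∂μ := by simp_rw [hFs]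
        _ = ∏ k ∈ s, ∫ ω, g k ω ∂μ := h2
        _ = ∏ _k ∈ s, a := Finset.prod_congr rfl fun k _ => hgval k
        _ = a ^ j := by rw [Finset.prod_const, hcard]
  have hGid : ∀ j : ℕ, IdentDistrib (G j) (fun ω => ‖ε 0 ω‖ ^ p) μ μ := fun j =>
    (hεiid.2 (n - j)).comp (hpowm.comp measurable_norm)
  have hGint : ∀ j, Integrable (G j) μ := fun j => (hGid j).integrable_iff.2 hεp
  have hGval : ∀ j, ∫ ω, G j ω ∂μ = c := fun j => (hGid j).integral_eq
  have hFGindep : ∀ j : ℕ, IndepFun (F j) (G j) μ := by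
    intro j
    have hφ : Measurable fun f : ℤ → (B →L[ℝ] B) => ∏ i ∈ Finset.range j, ‖f (n - i)‖ ^ p :=
      Finset.measurable_prod _ fun i _ => hpowm.comp (measurable_pi_apply _).norm
    have hψ : Measurable fun f : ℤ → B => ‖f (n - j)‖ ^ p :=
      hpowm.comp (measurable_pi_apply _).norm
    exact hindep.comp hφ hψ
  have hFnn : ∀ j ω, 0 ≤ F j ω := fun j ω =>
    Finset.prod_nonneg fun i _ => Real.rpow_nonneg (norm_nonneg _) _
  have hGnn : ∀ j ω, 0 ≤ G j ω := fun j ω => Real.rpow_nonneg (norm_nonneg _) _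
  have hpt : ∀ j ω, ‖T j ω‖ ^ p ≤ F j ω * G j ω := by
    intro j ω
    have h1 : ‖T j ω‖ ≤ (∏ i ∈ Finset.range j, ‖ρ (n - i) ω‖) * ‖ε (n - j) ω‖ :=
      le_trans ((prodOp ρ n j ω).le_opNorm _)
        (mul_le_mul_of_nonneg_right (prodOp_norm_le ρ j n ω) (norm_nonneg _))
    have h2 := Real.rpow_le_rpow (norm_nonneg _) h1 hp0.le
    refine le_trans h2 (le_of_eq ?_)
    rw [Real.mul_rpow (Finset.prod_nonneg fun i _ => norm_nonneg _) (norm_nonneg _),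
      ← Real.finset_prod_rpow _ _ (fun i _ => norm_nonneg _) _]
  have hkey : ∀ j, ∫⁻ ω, (‖T j ω‖₊ : ℝ≥0∞) ^ p ∂μ ≤ ENNReal.ofReal (a ^ j * c) := by
    intro j
    have hFGi : Integrable (fun ω => F j ω * G j ω) μ :=
      (hFGindep j).integrable_mul (hFfact j).1 (hGint j)
    have hFGv : ∫ ω, F j ω * G j ω ∂μ = a ^ j * c := by
      have h := (hFGindep j).integral_mul_eq_mul_integral (hFfact j).1.aestronglyMeasurable (hGint j).aestronglyMeasurable
      simpa [Pi.mul_apply, (hFfact j).2, hGval j] using h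
    calc ∫⁻ ω, (‖T j ω‖₊ : ℝ≥0∞) ^ p ∂μ
        = ∫⁻ ω, ENNReal.ofReal (‖T j ω‖ ^ p) ∂μ := by
          refine lintegral_congr fun ω => ?_
          rw [← ENNReal.ofReal_rpow_of_nonneg (norm_nonneg _) hp0.le,
            ofReal_norm, enorm_eq_nnnorm]
      _ ≤ ∫⁻ ω, ENNReal.ofReal (F j ω * G j ω) ∂μ :=
          lintegral_mono fun ω => ENNReal.ofReal_le_ofReal (hpt j ω)
      _ = ENNReal.ofReal (∫ ω, F j ω * G j ω ∂μ) :=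
          (ofReal_integral_eq_lintegral_ofReal hFGi
            (Filter.Eventually.of_forall fun ω => mul_nonneg (hFnn j ω) (hGnn j ω))).symm
      _ = ENNReal.ofReal (a ^ j * c) := by rw [hFGv]
  set r : ℝ≥0∞ := ENNReal.ofReal (a ^ (1/p)) with hrdef
  set C : ℝ≥0∞ := ENNReal.ofReal (c ^ (1/p)) with hCdef
  have hLq : ∀ j, eLpNorm (T j) q μ ≤ r ^ j * C := by
    intro j
    rw [eLpNorm_eq_lintegral_rpow_enorm_toReal hq0 hqt, hqr]
    have h1 := ENNReal.rpow_le_rpow (hkey j) (one_div_nonneg.2 hp0.le)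
    refine le_trans h1 (le_of_eq ?_)
    rw [ENNReal.ofReal_rpow_of_nonneg (mul_nonneg (pow_nonneg ha0 j) hc0)
      (one_div_nonneg.2 hp0.le)]
    have heq : (a ^ j * c) ^ (1/p) = (a ^ (1/p)) ^ j * c ^ (1/p) := by
      rw [Real.mul_rpow (pow_nonneg ha0 j) hc0, ← Real.rpow_natCast a j,
        ← Real.rpow_mul ha0, mul_comm (j:ℝ) (1/p), Real.rpow_mul ha0, Real.rpow_natCast]
    rw [heq, ENNReal.ofReal_mul (pow_nonneg (Real.rpow_nonneg ha0 _) j),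
      ENNReal.ofReal_pow (Real.rpow_nonneg ha0 _)]
  have hr1 : r < 1 := by
    rw [hrdef, ← ENNReal.ofReal_one]
    exact (ENNReal.ofReal_lt_ofReal_iff one_pos).2
      (Real.rpow_lt_one ha0 hρlt (one_div_pos.2 hp0))
  have hsumLq : ∑' j, eLpNorm (T j) q μ ≠ ∞ := by
    refine ne_top_of_le_ne_top ?_ (ENNReal.tsum_le_tsum hLq)
    rw [ENNReal.tsum_mul_right, ENNReal.tsum_geometric]
    exact (ENNReal.mul_lt_top (ENNReal.inv_lt_top.2 (tsub_pos_of_lt hr1))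
      ENNReal.ofReal_lt_top).ne
  have hTae : ∀ᵐ ω ∂μ, Summable fun j : ℕ => ‖T j ω‖ := by
    have hmeasT : ∀ j : ℕ, Measurable fun ω => (‖T j ω‖₊ : ℝ≥0∞) := fun j =>
      (hTm j).nnnorm.coe_nnreal_ennreal
    have h2 : ∫⁻ ω, ∑' j, (‖T j ω‖₊ : ℝ≥0∞) ∂μ ≠ ∞ := by
      rw [lintegral_tsum fun j => (hmeasT j).aemeasurable]
      refine ne_top_of_le_ne_top hsumLq (ENNReal.tsum_le_tsum fun j => ?_)
      simp_rw [← enorm_eq_nnnorm]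
      rw [← eLpNorm_one_eq_lintegral_enorm]
      exact eLpNorm_le_eLpNorm_of_exponent_le hq1 (hTm j).aestronglyMeasurable
    filter_upwards [ae_lt_top (Measurable.ennreal_tsum hmeasT) h2] with ω hω
    have hsum : Summable fun j => ‖T j ω‖₊ := ENNReal.tsum_coe_ne_top_iff_summable.1 hω.ne
    simpa [coe_nnnorm] using NNReal.summable_coe.2 hsum
  refine ⟨hTae, ?_⟩
  refine ⟨fun ω => μ0 + ∑' j, T j ω, ?_⟩
  set S : Ω → B := fun ω => μ0 + ∑' j, T j ω with hSdef
  have hulim : Tendsto (fun m : ℕ => ∑' j, eLpNorm (T (j + m)) q μ) atTop (𝓝 0) :=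
    ENNReal.tendsto_sum_nat_add _ hsumLq
  refine tendsto_of_tendsto_of_tendsto_of_le_of_le tendsto_const_nhds hulim
    (fun m => zero_le) ?_
  intro m
  have hDb : ∀ᵐ ω ∂μ, ‖(μ0 + ∑ j ∈ Finset.range m, T j ω) - S ω‖ ≤ ∑' j, ‖T (j + m) ω‖ := by
    filter_upwards [hTae] with ω hω
    have hsv : Summable fun j => T j ω := hω.of_norm
    have h1 : (μ0 + ∑ j ∈ Finset.range m, T j ω) - S ω = -∑' j, T (j + m) ω := by
      have h2 := Summable.sum_add_tsum_nat_add m hsv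
      simp only [hSdef]
      rw [← h2]
      abel
    rw [h1, norm_neg]
    exact norm_tsum_le_tsum_norm ((summable_nat_add_iff m).2 hω)
  have hbound : eLpNorm (fun ω => (μ0 + ∑ j ∈ Finset.range m, T j ω) - S ω) q μ
      ≤ ∑' j, eLpNorm (T (j + m)) q μ := by
    refine le_trans (eLpNorm_mono_ae_real hDb) ?_
    have hmk : ∀ k : ℕ, AEStronglyMeasurable
        (fun ω => ∑ i ∈ Finset.range k, ‖T (i + m) ω‖) μ := fun k =>
      (Finset.measurable_sum _ fun i _ => (hTm (i + m)).norm).aestronglyMeasurable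
    have hconv : ∀ᵐ ω ∂μ, Tendsto (fun k => ∑ i ∈ Finset.range k, ‖T (i + m) ω‖) atTop
        (𝓝 (∑' j, ‖T (j + m) ω‖)) := by
      filter_upwards [hTae] with ω hω
      exact ((summable_nat_add_iff m).2 hω).hasSum.tendsto_sum_nat
    refine le_trans (Lp.eLpNorm_lim_le_liminf_eLpNorm hmk _ hconv) ?_
    have hk : ∀ k : ℕ, eLpNorm (fun ω => ∑ i ∈ Finset.range k, ‖T (i + m) ω‖) q μ
        ≤ ∑' j, eLpNorm (T (j + m)) q μ := by
      intro k
      have hle := eLpNorm_sum_le (μ := μ) (f := fun i ω => ‖T (i + m) ω‖) (s := Finset.range k)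
        (fun i _ => (hTm (i + m)).norm.aestronglyMeasurable) hq1
      refine le_trans (le_of_eq ?_) (le_trans hle ?_)
      · congr 1
        funext ω
        simp
      · refine le_trans (le_of_eq (Finset.sum_congr rfl fun i _ => eLpNorm_norm _)) ?_
        exact ENNReal.sum_le_tsum _
    calc atTop.liminf (fun k => eLpNorm (fun ω => ∑ i ∈ Finset.range k, ‖T (i + m) ω‖) q μ)
        ≤ atTop.liminf (fun _ => ∑' j, eLpNorm (T (j + m)) q μ) :=
          Filter.liminf_le_liminf (Filter.Eventually.of_forall hk)
      _ = ∑' j, eLpNorm (T (j + m)) q μ := Filter.liminf_const _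
  exact hbound
end
end

section
/- Let B be an r-smooth separable Banach space for some r ∈ (1,2]. Then there exists a constant D ≥ 1 such that for every sequence (ξ_i)_{i=1}^n of B-valued martingale differences, E‖ξ_1 + ⋯ + ξ_n‖_B^r ≤ D Σ_{i=1}^n E‖ξ_i‖_B^r. -/
open MeasureTheory Filter Topology ProbabilityTheory
open scoped ENNReal NNReal
set_option maxHeartbeats 4000000
noncomputable section

namespace RSM
variable {r : ℝ}

lemma bernoulli_upper (hr1 : 1 < r) (hr2 : r ≤ 2) {u : ℝ} (hu : -1 ≤ u) :
    (1 + u) ^ r ≤ 1 + r * u + u ^ 2 := by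
  have h0 : (0:ℝ) ≤ 1 + u := by linarith
  have h1 : (1 + u) ^ r = (1 + u) * (1 + u) ^ (r - 1) := by
    rw [← Real.rpow_one_add' h0 (by intro h; nlinarith [h] : 1 + (r-1) ≠ 0)]
    ring_nf
  have h2 : (1 + u) ^ (r - 1) ≤ 1 + (r - 1) * u :=
    rpow_one_add_le_one_add_mul_self hu (by linarith) (by linarith)
  have h3 : (1 + u) * (1 + u) ^ (r - 1) ≤ (1 + u) * (1 + (r - 1) * u) :=
    mul_le_mul_of_nonneg_left h2 h0
  nlinarith [sq_nonneg u]

variable {B : Type*} [NormedAddCommGroup B] [NormedSpace ℝ B]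

lemma tangent_below (hr1 : 1 < r) {a c : ℝ} (ha : 0 ≤ a) (hc : 0 ≤ c) :
    c ^ r + r * c ^ (r - 1) * (a - c) ≤ a ^ r := by
  rcases eq_or_lt_of_le hc with h | h
  · rw [← h]
    rw [Real.zero_rpow (by positivity : r ≠ 0), Real.zero_rpow (by intro h'; nlinarith : r - 1 ≠ 0)]
    simpa using Real.rpow_nonneg ha r
  · have hb : -1 ≤ a / c - 1 := by
      have : 0 ≤ a / c := div_nonneg ha h.le
      linarith
    have := one_add_mul_self_le_rpow_one_add hb hr1.le
    have h4 : (1 + (a / c - 1)) ^ r = a ^ r / c ^ r := by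
      rw [show 1 + (a / c - 1) = a / c by ring, Real.div_rpow ha h.le]
    rw [h4] at this
    have hcr : (0:ℝ) < c ^ r := Real.rpow_pos_of_pos h r
    have hc1 : c ^ (r - 1) = c ^ r / c := Real.rpow_sub_one h.ne' r
    have := (mul_le_mul_of_nonneg_left this hcr.le)
    calc c ^ r + r * c ^ (r - 1) * (a - c)
        = c ^ r * (1 + r * (a / c - 1)) := by
          rw [hc1]; field_simp
      _ ≤ c ^ r * (a ^ r / c ^ r) := this
      _ = a ^ r := by field_simp

lemma rpow_sub_one_le (hr1 : 1 < r) (hr2 : r ≤ 2) {s : ℝ} (hs : 0 ≤ s) :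
    s ^ (r - 1) ≤ 1 + s := by
  rcases le_or_gt s 1 with h | h
  · exact le_trans (Real.rpow_le_one hs h (by linarith)) (by linarith)
  · calc s ^ (r-1) ≤ s ^ (1:ℝ) := Real.rpow_le_rpow_of_exponent_le h.le (by linarith)
      _ = s := Real.rpow_one s
      _ ≤ 1 + s := by linarith

lemma add_rpow_le (hr1 : 1 < r) {a b : ℝ} (ha : 0 ≤ a) (hb : 0 ≤ b) :
    (a + b) ^ r ≤ 2 ^ r * (a ^ r + b ^ r) := by
  have h2 : (0:ℝ) < 2 ^ r := Real.rpow_pos_of_pos (by norm_num) r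
  rcases le_total a b with h | h
  · calc (a+b)^r ≤ (2*b)^r := Real.rpow_le_rpow (by linarith) (by linarith) (by linarith)
      _ = 2^r * b^r := Real.mul_rpow (by norm_num) hb
      _ ≤ 2^r * (a^r + b^r) := by nlinarith [Real.rpow_nonneg ha r]
  · calc (a+b)^r ≤ (2*a)^r := Real.rpow_le_rpow (by linarith) (by linarith) (by linarith)
      _ = 2^r * a^r := Real.mul_rpow (by norm_num) ha
      _ ≤ 2^r * (a^r + b^r) := by nlinarith [Real.rpow_nonneg hb r]

lemma exists_support (N : B → ℝ) (hadd : ∀ x y, N (x+y) ≤ N x + N y)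
    (hsmul : ∀ (a:ℝ) (x:B), N (a • x) = |a| * N x)
    (hnn : ∀ x, 0 ≤ N x) (x : B) :
    ∃ g : B →ₗ[ℝ] ℝ, (∀ y, g y ≤ N y) ∧ g x = N x := by
  have hN0 : N (0:B) = 0 := by simpa using hsmul 0 0
  by_cases hx : x = 0
  · exact ⟨0, fun y => hnn y, by simp [hx, hN0]⟩
  · set p := LinearPMap.mkSpanSingleton (K := ℝ) (σ := RingHom.id ℝ) x (N x) hx with hp
    have hsub : ∀ z : p.domain, p z ≤ N z := by
      intro z
      obtain ⟨t, ht⟩ := Submodule.mem_span_singleton.1 z.2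
      have hz : z = ⟨t • x, by rw [ht]; exact z.2⟩ := Subtype.ext ht.symm
      rw [hz]
      erw [LinearPMap.mkSpanSingleton'_apply]
      rw [hsmul]
      exact mul_le_mul_of_nonneg_right (le_abs_self t) (hnn x)
    obtain ⟨g, hg1, hg2⟩ := exists_extension_of_le_sublinear p N
      (fun cc hcc y => by rw [hsmul, abs_of_pos hcc]) hadd hsub
    refine ⟨g, hg2, ?_⟩
    have := hg1 ⟨x, Submodule.mem_span_singleton_self x⟩
    rw [LinearPMap.mkSpanSingleton_apply] at this
    exact this

lemma lemA (hr1 : 1 < r) (hr2 : r ≤ 2) (N : B → ℝ)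
    (hadd : ∀ x y, N (x+y) ≤ N x + N y)
    (hsmul : ∀ (a:ℝ) (x:B), N (a • x) = |a| * N x)
    {c C : ℝ} (hc : 0 < c) (hC : 0 < C)
    (hlow : ∀ x, c * ‖x‖ ≤ N x) (hup : ∀ x, N x ≤ C * ‖x‖)
    {K : ℝ} (hK0 : 0 ≤ K)
    (hK : ∀ t : ℝ, 0 < t → ∀ x y : B, N x = 1 → N y = 1 →
      N (x + t • y) + N (x - t • y) - 2 ≤ K * t ^ r) (x : B) :
    ∃ f : B →L[ℝ] ℝ, (∀ y, |f y| ≤ (r * (N x) ^ (r-1) * C) * ‖y‖) ∧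
      ∀ y, N (x+y) ^ r ≤ (N x) ^ r + f y +
        (r*K + (1+K)^2 + r + 4) * (N y) ^ r := by
  have hnn : ∀ z, 0 ≤ N z := fun z =>
    le_trans (mul_nonneg hc.le (norm_nonneg z)) (hlow z)
  have hN0 : N (0:B) = 0 := by simpa using hsmul 0 0
  have hNneg : ∀ z, N (-z) = N z := by
    intro z
    simpa using hsmul (-1) z
  set C₂ := r*K + (1+K)^2 + r + 4 with hC₂
  have hC₂nn : r + 4 ≤ C₂ := by nlinarith [sq_nonneg (1+K)]
  have hpos : ∀ z : B, z ≠ 0 → 0 < N z := by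
    intro z hz
    rcases eq_or_lt_of_le (hnn z) with h | h
    · exfalso
      have h2 := hlow z
      rw [← h] at h2
      have : ‖z‖ ≤ 0 := by nlinarith [norm_nonneg z]
      exact hz (norm_le_zero_iff.1 (this))
    · exact h
  by_cases hx : x = 0
  · refine ⟨0, ?_, ?_⟩
    · intro y
      have h1 := hnn x
      simp only [ContinuousLinearMap.zero_apply, abs_zero]
      positivity
    · intro y
      have h4 : (1:ℝ) ≤ C₂ := by nlinarith
      rw [hx, zero_add, hN0, Real.zero_rpow (by positivity : r ≠ 0)]
      have hy := Real.rpow_nonneg (hnn y) r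
      simp only [ContinuousLinearMap.zero_apply]
      nlinarith
  · have ha : 0 < N x := hpos x hx
    set a := N x with haa
    obtain ⟨g, hg, hgx⟩ := exists_support N hadd hsmul hnn x
    have hgabs : ∀ y, |g y| ≤ N y := by
      intro y
      have h2 : -g y ≤ N y := by
        have h := hg (-y)
        rwa [hNneg, map_neg] at h
      exact abs_le.2 ⟨by linarith, hg y⟩
    have hgnorm : ∀ y, ‖g y‖ ≤ C * ‖y‖ :=
      fun y => (Real.norm_eq_abs _ ▸ hgabs y).trans (hup y)
    set G : B →L[ℝ] ℝ := g.mkContinuous C hgnorm with hG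
    have hGapp : ∀ y, G y = g y := fun y => rfl
    have harnn : 0 ≤ r * a ^ (r-1) := by positivity
    have hfapp : ∀ y, ((r * a ^ (r-1)) • G) y = r * a^(r-1) * g y := by
      intro y
      rw [ContinuousLinearMap.smul_apply, hGapp, smul_eq_mul]
    refine ⟨(r * a ^ (r-1)) • G, ?_, ?_⟩
    · intro y
      rw [hfapp, abs_mul, abs_of_nonneg harnn]
      calc r * a^(r-1) * |g y| ≤ r * a^(r-1) * (C * ‖y‖) :=
            mul_le_mul_of_nonneg_left ((hgabs y).trans (hup y)) harnn
        _ = r * a^(r-1) * C * ‖y‖ := by ring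
    · intro y
      rw [hfapp]
      by_cases hy : y = 0
      · simp only [hy, add_zero, map_zero, hN0, mul_zero]
        rw [Real.zero_rpow (by positivity : r ≠ 0)]
        simp [haa]
      · have hb : 0 < N y := hpos y hy
        set b := N y with hbb
        have hbr0 : 0 ≤ b^r := Real.rpow_nonneg hb.le r
        have har0 : 0 ≤ a^r := Real.rpow_nonneg ha.le r
        have haa1 : a^(r-1) * a = a^r := by
          nth_rewrite 2 [← Real.rpow_one a]
          rw [← Real.rpow_add ha]
          norm_num
        rcases le_or_gt b a with hba | hba
        · -- main case: b ≤ a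
          set t := b / a with ht
          have ht0 : 0 < t := div_pos hb ha
          have ht1 : t ≤ 1 := (div_le_one ha).2 hba
          have hbat : a * t = b := by
            rw [ht]
            field_simp
          have htbr : a^r * t^r = b^r := by
            rw [ht, Real.div_rpow hb.le ha.le]
            field_simp
          have htr0 : 0 ≤ t^r := Real.rpow_nonneg ht0.le r
          have hsm := hK t ht0 (a⁻¹ • x) (b⁻¹ • y)
            (by rw [hsmul, abs_of_pos (inv_pos.2 ha)]; field_simp; exact haa.symm)
            (by rw [hsmul, abs_of_pos (inv_pos.2 hb)]; field_simp; exact hbb.symm)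
          have htbinv : t * b⁻¹ = a⁻¹ := by
            rw [ht]
            field_simp
          have hrw1 : a⁻¹ • x + t • b⁻¹ • y = a⁻¹ • (x + y) := by
            rw [smul_smul, htbinv, smul_add]
          have hrw2 : a⁻¹ • x - t • b⁻¹ • y = a⁻¹ • (x - y) := by
            rw [smul_smul, htbinv, smul_sub]
          rw [hrw1, hrw2, hsmul, hsmul, abs_of_pos (inv_pos.2 ha)] at hsm
          have hsm2 : N (x+y) + N (x-y) ≤ 2*a + K * a * t^r := by
            have h1 : a⁻¹ * N (x+y) + a⁻¹ * N (x-y) ≤ 2 + K * t^r := by linarith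
            have h2 := mul_le_mul_of_nonneg_left h1 ha.le
            calc N (x+y) + N (x-y)
                = a * (a⁻¹ * N (x+y) + a⁻¹ * N (x-y)) := by
                  field_simp
              _ ≤ a * (2 + K * t^r) := h2
              _ = 2*a + K * a * t^r := by ring
          have hlow2 : a - g y ≤ N (x - y) := by
            have h3 := hg (x - y)
            rw [map_sub, hgx, ← haa] at h3
            linarith
          set θ := K * a * t^r with hθ
          have hθ0 : 0 ≤ θ := by positivity
          have hgyb : |g y| ≤ b := hgabs y
          have hup2 : N (x+y) ≤ a + g y + θ := by linarith
          set u := (g y + θ) / a with hu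
          have hau2 : a * u = g y + θ := by
            rw [hu, mul_comm, div_mul_cancel₀ _ ha.ne']
          have hu1 : -1 ≤ u := by
            rw [hu, le_div_iff₀ ha]
            have := (abs_le.1 hgyb).1
            nlinarith
          have h1u : (0:ℝ) ≤ 1 + u := by linarith
          have hau : N (x+y) ≤ a * (1 + u) := by nlinarith
          have key1 : N (x+y) ^ r ≤ a^r * (1+u)^r := by
            calc N (x+y) ^ r ≤ (a * (1+u))^r :=
                  Real.rpow_le_rpow (hnn _) hau (by linarith)
              _ = a^r * (1+u)^r := Real.mul_rpow ha.le h1u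
          have key2 : (1+u)^r ≤ 1 + r*u + u^2 := bernoulli_upper hr1 hr2 hu1
          have htr2 : t ≤ t^(r/2) := by
            calc t = t^(1:ℝ) := (Real.rpow_one t).symm
              _ ≤ t^(r/2) := Real.rpow_le_rpow_of_exponent_ge ht0 ht1 (by linarith)
          have htr3 : t^r ≤ t^(r/2) := Real.rpow_le_rpow_of_exponent_ge ht0 ht1 (by linarith)
          have huabs : |u| ≤ (1+K) * t^(r/2) := by
            rw [hu, abs_div, abs_of_pos ha, div_le_iff₀ ha]
            have h1 : |g y + θ| ≤ b + θ := by
              have h2 := abs_le.1 hgyb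
              rw [abs_le]
              constructor <;> [nlinarith; nlinarith]
            calc |g y + θ| ≤ b + θ := h1
              _ = a * t + K * a * t^r := by rw [hθ, hbat]
              _ ≤ a * t^(r/2) + K * a * t^(r/2) := by
                  have q1 : a * t ≤ a * t^(r/2) := mul_le_mul_of_nonneg_left htr2 ha.le
                  have q2 : K * a * t^r ≤ K * a * t^(r/2) :=
                    mul_le_mul_of_nonneg_left htr3 (by positivity)
                  linarith
              _ = (1+K) * t^(r/2) * a := by ring
          have hu2 : u^2 ≤ (1+K)^2 * t^r := by
            have h2 : (t^(r/2))^2 = t^r := by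
              rw [sq, ← Real.rpow_add ht0]
              norm_num
            have h3 := sq_le_sq' (neg_le_of_abs_le huabs) (le_of_abs_le huabs)
            calc u^2 ≤ ((1+K) * t^(r/2))^2 := h3
              _ = (1+K)^2 * (t^(r/2))^2 := by ring
              _ = (1+K)^2 * t^r := by rw [h2]
          -- assemble
          have E1 : a^r * u = a^(r-1) * (g y + θ) := by
            rw [← hau2, ← haa1]
            ring
          have E2 : a^(r-1) * θ = K * b^r := by
            rw [hθ, ← htbr]
            calc a^(r-1) * (K * a * t^r) = K * ((a^(r-1) * a) * t^r) := by ring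
              _ = K * (a^r * t^r) := by rw [haa1]
          have E3 : a^r * u^2 ≤ (1+K)^2 * b^r := by
            calc a^r * u^2 ≤ a^r * ((1+K)^2 * t^r) :=
                  mul_le_mul_of_nonneg_left hu2 har0
              _ = (1+K)^2 * (a^r * t^r) := by ring
              _ = (1+K)^2 * b^r := by rw [htbr]
          clear_value u θ t b G a C₂
          calc N (x+y)^r ≤ a^r * (1+u)^r := key1
            _ ≤ a^r * (1 + r*u + u^2) :=
                mul_le_mul_of_nonneg_left key2 har0
            _ = a^r + r * (a^r * u) + a^r * u^2 := by ring
            _ = a^r + r * a^(r-1) * g y + r * (a^(r-1) * θ) + a^r * u^2 := by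
                rw [E1]; ring
            _ = a^r + r * a^(r-1) * g y + r * (K * b^r) + a^r * u^2 := by rw [E2]
            _ ≤ a^r + r * a^(r-1) * g y + r * K * b^r + (1+K)^2 * b^r := by linarith
            _ ≤ a^r + r * a^(r-1) * g y + C₂ * b^r := by
                have q0 : r * K + (1+K)^2 ≤ C₂ := by rw [hC₂]; linarith
                have q : (r * K + (1+K)^2) * b^r ≤ C₂ * b^r :=
                  mul_le_mul_of_nonneg_right q0 hbr0
                nlinarith
        · -- case a < b
          have h4r : N (x+y)^r ≤ 4 * b^r := by
            have h1 : N (x+y) ≤ 2*b := by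
              have := hadd x y
              nlinarith
            have h2 : N (x+y)^r ≤ (2*b)^r :=
              Real.rpow_le_rpow (hnn _) h1 (by linarith)
            have h3 : (2*b)^r = 2^r * b^r := Real.mul_rpow (by norm_num) hb.le
            have h24 : (2:ℝ)^r ≤ 4 := by
              calc (2:ℝ)^r ≤ (2:ℝ)^(2:ℝ) :=
                    Real.rpow_le_rpow_of_exponent_le one_le_two hr2
                _ = 4 := by
                    rw [show (2:ℝ) = ((2:ℕ):ℝ) by norm_num, Real.rpow_natCast]
                    norm_num
            nlinarith
          have hfb : |r * a^(r-1) * g y| ≤ r * b^r := by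
            rw [abs_mul, abs_of_nonneg harnn]
            have h5 : a^(r-1) * b ≤ b^(r-1) * b :=
              mul_le_mul_of_nonneg_right
                (Real.rpow_le_rpow (hnn x) hba.le (by linarith)) hb.le
            have hbr : b^(r-1) * b = b^r := by
              nth_rewrite 2 [← Real.rpow_one b]
              rw [← Real.rpow_add hb]
              norm_num
            have h6 : r * a^(r-1) * |g y| ≤ r * a^(r-1) * b :=
              mul_le_mul_of_nonneg_left (hgabs y) harnn
            nlinarith [Real.rpow_nonneg (hnn x) (r-1)]
          have h7 := abs_le.1 hfb
          nlinarith

-- helper: (s+δ)^r ≤ s^r + r*δ*(2+s)  for 0 ≤ s, 0 ≤ δ ≤ 1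
lemma helper (hr1 : 1 < r) (hr2 : r ≤ 2) {s δ : ℝ} (hs : 0 ≤ s) (hδ0 : 0 ≤ δ)
    (hδ1 : δ ≤ 1) : (s + δ) ^ r ≤ s ^ r + r * δ * (2 + s) := by
  have h1 := tangent_below hr1 (a := s) (c := s + δ) hs (by linarith)
  have h2 : (s+δ)^(r-1) ≤ 2 + s := by
    have := rpow_sub_one_le hr1 hr2 (s := s + δ) (by linarith)
    linarith
  have h3 : 0 ≤ (s+δ)^(r-1) := Real.rpow_nonneg (by linarith) _
  have h4 : r * (s+δ)^(r-1) * δ ≤ r * (2+s) * δ := by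
    apply mul_le_mul_of_nonneg_right _ hδ0
    apply mul_le_mul_of_nonneg_left h2 (by linarith)
  nlinarith

lemma norm_le_one_add_rpow (hr1 : 1 < r) {v : ℝ} (hv : 0 ≤ v) : v ≤ 1 + v ^ r := by
  rcases le_or_gt v 1 with h | h
  · nlinarith [Real.rpow_nonneg hv r]
  · calc v = v^(1:ℝ) := (Real.rpow_one v).symm
      _ ≤ v^r := Real.rpow_le_rpow_of_exponent_le h.le (by linarith)
      _ ≤ 1 + v^r := by linarith

variable [CompleteSpace B] [TopologicalSpace.SeparableSpace B]

lemma step (hr1 : 1 < r) (hr2 : r ≤ 2) (N : B → ℝ)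
    (hadd : ∀ x y, N (x+y) ≤ N x + N y)
    (hsmul : ∀ (a:ℝ) (x:B), N (a • x) = |a| * N x)
    {c C : ℝ} (hc : 0 < c) (hC : 0 < C)
    (hlow : ∀ x, c * ‖x‖ ≤ N x) (hup : ∀ x, N x ≤ C * ‖x‖)
    {K : ℝ} (hK0 : 0 ≤ K)
    (hK : ∀ t : ℝ, 0 < t → ∀ x y : B, N x = 1 → N y = 1 →
      N (x + t • y) + N (x - t • y) - 2 ≤ K * t ^ r)
    {Ω : Type} {𝓖 : MeasurableSpace Ω} {mΩ : MeasurableSpace Ω}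
    {μ : Measure Ω} [IsProbabilityMeasure μ]
    (h𝓖 : 𝓖 ≤ mΩ)
    {S ξ : Ω → B} (hS : StronglyMeasurable[𝓖] S) (hξm : AEStronglyMeasurable ξ μ)
    (hξi : Integrable ξ μ)
    (hSr : Integrable (fun ω => ‖S ω‖ ^ r) μ)
    (hξr : Integrable (fun ω => ‖ξ ω‖ ^ r) μ)
    (hcond : μ[ξ | 𝓖] =ᵐ[μ] 0) :
    ∫ ω, N (S ω + ξ ω) ^ r ∂μ ≤
      ∫ ω, N (S ω) ^ r ∂μ + (r*K + (1+K)^2 + r + 4) * ∫ ω, N (ξ ω) ^ r ∂μ := by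
  classical
  haveI : SigmaFinite (μ.trim h𝓖) := by infer_instance
  set C₂ := r*K + (1+K)^2 + r + 4 with hC₂
  have hC₂0 : 0 < C₂ := by nlinarith [sq_nonneg (1+K)]
  have hr0 : (0:ℝ) < r := by linarith
  have hnn : ∀ z : B, 0 ≤ N z := fun z =>
    le_trans (mul_nonneg hc.le (norm_nonneg z)) (hlow z)
  -- continuity of N
  have hNlip : ∀ x y : B, N x ≤ N y + C * ‖x - y‖ := by
    intro x y
    calc N x = N (y + (x - y)) := by rw [show y + (x - y) = x by abel]
      _ ≤ N y + N (x - y) := hadd _ _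
      _ ≤ N y + C * ‖x - y‖ := by linarith [hup (x-y)]
  have hNcont : Continuous N := by
    have : LipschitzWith (Real.toNNReal C) N := by
      apply LipschitzWith.of_dist_le_mul
      intro x y
      rw [Real.dist_eq, Real.coe_toNNReal _ hC.le, dist_eq_norm]
      rw [abs_le]
      constructor
      · have := hNlip y x
        have h2 : ‖y - x‖ = ‖x - y‖ := norm_sub_rev y x
        linarith [hNlip y x, h2 ▸ (hNlip y x)]
      · linarith [hNlip x y]
    exact this.continuous
  -- measurability / integrability helpers
  have hSm : AEStronglyMeasurable S μ := (hS.mono h𝓖).aestronglyMeasurable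
  have hmeas : ∀ (f : Ω → B), AEStronglyMeasurable f μ →
      AEStronglyMeasurable (fun ω => N (f ω) ^ r) μ := by
    intro f hf
    have h1 : Continuous (fun x : B => N x ^ r) :=
      (Real.continuous_rpow_const hr0.le).comp hNcont
    exact h1.comp_aestronglyMeasurable hf
  have hint : ∀ (f : Ω → B), AEStronglyMeasurable f μ →
      Integrable (fun ω => ‖f ω‖ ^ r) μ →
      Integrable (fun ω => N (f ω) ^ r) μ := by
    intro f hf hfr
    apply Integrable.mono' (hfr.const_mul (C^r)) (hmeas f hf)
    filter_upwards with ω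
    rw [Real.norm_of_nonneg (Real.rpow_nonneg (hnn (f ω)) r)]
    calc N (f ω) ^ r ≤ (C * ‖f ω‖) ^ r :=
          Real.rpow_le_rpow (hnn _) (hup _) hr0.le
      _ = C^r * ‖f ω‖^r := Real.mul_rpow hC.le (norm_nonneg _)
  have hSξm : AEStronglyMeasurable (fun ω => S ω + ξ ω) μ := hSm.add hξm
  have hSξr : Integrable (fun ω => ‖S ω + ξ ω‖ ^ r) μ := by
    apply Integrable.mono' (((hSr.add hξr).const_mul (2^r)))
      (((Real.continuous_rpow_const hr0.le).comp continuous_norm).comp_aestronglyMeasurable hSξm)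
    filter_upwards with ω
    show ‖‖S ω + ξ ω‖ ^ r‖ ≤ 2^r * (‖S ω‖^r + ‖ξ ω‖^r)
    rw [Real.norm_of_nonneg (Real.rpow_nonneg (norm_nonneg (S ω + ξ ω)) r)]
    calc ‖S ω + ξ ω‖^r ≤ (‖S ω‖ + ‖ξ ω‖)^r :=
          Real.rpow_le_rpow (norm_nonneg _) (norm_add_le _ _) hr0.le
      _ ≤ 2^r * (‖S ω‖^r + ‖ξ ω‖^r) := add_rpow_le hr1 (norm_nonneg _) (norm_nonneg _)
      _ = 2^r * (‖S ω‖^r + ‖ξ ω‖^r) := rfl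
  have hψf : Integrable (fun ω => N (S ω + ξ ω) ^ r) μ := hint _ hSξm hSξr
  have hψS : Integrable (fun ω => N (S ω) ^ r) μ := hint _ hSm hSr
  have hψξ : Integrable (fun ω => N (ξ ω) ^ r) μ := hint _ hξm hξr
  have hErr : Integrable (fun ω => 1 + ‖S ω‖^r + ‖ξ ω‖^r) μ :=
    ((integrable_const 1).add hSr).add hξr
  set M := ∫ ω, (1 + ‖S ω‖^r + ‖ξ ω‖^r) ∂μ with hM
  have hM0 : 0 ≤ M := by
    apply integral_nonneg
    intro ω
    have := Real.rpow_nonneg (norm_nonneg (S ω)) r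
    have := Real.rpow_nonneg (norm_nonneg (ξ ω)) r
    simp only [Pi.zero_apply]
    nlinarith
  set C₅ := r * C * (2 + C) * (2 + C₂) with hC₅
  have hC₅0 : 0 < C₅ := by positivity
  -- choose support-type functionals at the dense sequence points
  have hBne : Nonempty B := ⟨0⟩
  set d : ℕ → B := TopologicalSpace.denseSeq B with hd
  have hdr : DenseRange d := TopologicalSpace.denseRange_denseSeq B
  choose f hf1 hf2 using fun j : ℕ =>
    lemA hr1 hr2 N hadd hsmul hc hC hlow hup hK0 hK (d j)
  -- main estimate for each ε
  have main : ∀ ε : ℝ, 0 < ε → ε ≤ 1 → C * ε ≤ 1 →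
      ∫ ω, N (S ω + ξ ω) ^ r ∂μ ≤
        ∫ ω, N (S ω) ^ r ∂μ + C₂ * ∫ ω, N (ξ ω) ^ r ∂μ + ε * C₅ * M := by
    intro ε hε0 hε1 hεC
    -- the partition
    set A : ℕ → Set Ω := fun j =>
      {ω | ‖S ω - d j‖ < ε ∧ ∀ i, i < j → ¬ (‖S ω - d i‖ < ε)} with hA
    have hAmeas' : ∀ j, MeasurableSet[𝓖] {ω | ‖S ω - d j‖ < ε} := by
      intro j
      have h1 : StronglyMeasurable[𝓖] (fun ω => ‖S ω - d j‖) :=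
        (hS.sub stronglyMeasurable_const).norm
      exact h1.measurable measurableSet_Iio
    have hAmeas : ∀ j, MeasurableSet[𝓖] (A j) := by
      intro j
      have : A j = {ω | ‖S ω - d j‖ < ε} ∩ ⋂ (i : ℕ) (_ : i < j),
          {ω | ‖S ω - d i‖ < ε}ᶜ := by
        ext ω
        simp [hA, Set.mem_iInter]
      rw [this]
      exact (hAmeas' j).inter (MeasurableSet.iInter fun i =>
        MeasurableSet.iInter fun _ => (hAmeas' i).compl)
    have hAdisj : Pairwise (Function.onFun Disjoint A) := by
      intro i j hij
      rcases lt_or_gt_of_ne hij with h | h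
      · refine Set.disjoint_left.2 fun ω hωi hωj => ?_
        exact hωj.2 i h hωi.1
      · refine Set.disjoint_left.2 fun ω hωi hωj => ?_
        exact hωi.2 j h hωj.1
    have hAcover : (⋃ j, A j) = Set.univ := by
      ext ω
      simp only [Set.mem_iUnion, Set.mem_univ, iff_true]
      have hex : ∃ j, ‖S ω - d j‖ < ε := by
        obtain ⟨j, hj⟩ := hdr.exists_dist_lt (S ω) hε0
        exact ⟨j, by rwa [dist_eq_norm] at hj⟩
      exact ⟨Nat.find hex, Nat.find_spec hex, fun i hi => Nat.find_min hex hi⟩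
    -- the pointwise bound on each piece
    have hptwise : ∀ j, ∀ ω ∈ A j,
        N (S ω + ξ ω) ^ r ≤ (N (S ω) ^ r + C₂ * N (ξ ω) ^ r
          + ε * C₅ * (1 + ‖S ω‖^r + ‖ξ ω‖^r)) + f j (ξ ω) := by
      intro j ω hω
      obtain ⟨hω1, -⟩ := hω
      set x := d j
      set h := S ω - x with hh
      have hhn : ‖h‖ ≤ ε := hω1.le
      set δ := C * ε with hδ
      have hδ0 : 0 ≤ δ := by positivity
      have hNh : N h ≤ δ := le_trans (hup h)
        (by rw [hδ]; exact mul_le_mul_of_nonneg_left hhn hC.le)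
      have hval : S ω + ξ ω = x + (h + ξ ω) := by rw [hh]; abel
      have main0 := hf2 j (h + ξ ω)
      rw [← hval] at main0
      -- (1) N x ≤ N S + δ  and  N(x)^r ≤ ψS + r δ (2 + N S)
      have hNx : N x ≤ N (S ω) + δ := by
        have h1 : N x ≤ N (S ω) + C * ‖x - S ω‖ := hNlip x (S ω)
        have h2 : ‖x - S ω‖ = ‖h‖ := by rw [hh, norm_sub_rev]
        rw [h2] at h1
        nlinarith
      have h1r : N x ^ r ≤ N (S ω) ^ r + r * δ * (2 + N (S ω)) := by
        calc N x ^ r ≤ (N (S ω) + δ)^r :=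
              Real.rpow_le_rpow (hnn x) hNx hr0.le
          _ ≤ N (S ω) ^ r + r * δ * (2 + N (S ω)) :=
              helper hr1 hr2 (hnn _) hδ0 hεC
      -- (3)
      have hNhξ : N (h + ξ ω) ≤ N (ξ ω) + δ := by
        have := hadd h (ξ ω)
        have h2 : N (h + ξ ω) ≤ N h + N (ξ ω) := this
        linarith
      have h3r : N (h + ξ ω) ^ r ≤ N (ξ ω) ^ r + r * δ * (2 + N (ξ ω)) := by
        calc N (h + ξ ω) ^ r ≤ (N (ξ ω) + δ)^r :=
              Real.rpow_le_rpow (hnn _) hNhξ hr0.le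
          _ ≤ N (ξ ω) ^ r + r * δ * (2 + N (ξ ω)) :=
              helper hr1 hr2 (hnn _) hδ0 hεC
      -- (2)
      have h2r : |f j h| ≤ r * (2 + N (S ω)) * δ := by
        have h1 := hf1 j h
        have h2 : N x ^ (r-1) ≤ 2 + N (S ω) := by
          have h3 := rpow_sub_one_le hr1 hr2 (hnn x)
          linarith
        calc |f j h| ≤ r * N x ^ (r-1) * C * ‖h‖ := h1
          _ ≤ r * (2 + N (S ω)) * C * ε := by
              have hp0 : 0 ≤ N x ^ (r - 1) := Real.rpow_nonneg (hnn x) _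
              have := mul_le_mul_of_nonneg_left h2 hr0.le
              have hq : r * N x ^ (r-1) * C ≤ r * (2 + N (S ω)) * C :=
                mul_le_mul_of_nonneg_right (by nlinarith) hC.le
              apply mul_le_mul hq hhn (norm_nonneg _)
              have h8 := hnn (S ω)
              have : (0:ℝ) ≤ 2 + N (S ω) := by linarith
              positivity
          _ = r * (2 + N (S ω)) * δ := by rw [hδ]; ring
      have hfadd : f j (h + ξ ω) = f j h + f j (ξ ω) := map_add _ _ _
      -- error consolidation
      have hS' : N (S ω) ≤ C * (1 + ‖S ω‖^r) := by
        calc N (S ω) ≤ C * ‖S ω‖ := hup _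
          _ ≤ C * (1 + ‖S ω‖^r) := by
              have := norm_le_one_add_rpow hr1 (norm_nonneg (S ω))
              exact mul_le_mul_of_nonneg_left this hC.le
      have hξ' : N (ξ ω) ≤ C * (1 + ‖ξ ω‖^r) := by
        calc N (ξ ω) ≤ C * ‖ξ ω‖ := hup _
          _ ≤ C * (1 + ‖ξ ω‖^r) := by
              have := norm_le_one_add_rpow hr1 (norm_nonneg (ξ ω))
              exact mul_le_mul_of_nonneg_left this hC.le
      have hSnn := hnn (S ω)
      have hξnn := hnn (ξ ω)
      have hS'' : 2 + N (S ω) ≤ (2 + C) * (1 + ‖S ω‖^r) := by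
        have h0 : 0 ≤ ‖S ω‖^r := Real.rpow_nonneg (norm_nonneg _) r
        nlinarith
      have hξ'' : 2 + N (ξ ω) ≤ (2 + C) * (1 + ‖ξ ω‖^r) := by
        have h0 : 0 ≤ ‖ξ ω‖^r := Real.rpow_nonneg (norm_nonneg _) r
        nlinarith
      have hfh := (abs_le.1 h2r).2
      -- final assembly
      have hSr0 : 0 ≤ ‖S ω‖^r := Real.rpow_nonneg (norm_nonneg _) r
      have hξr0 : 0 ≤ ‖ξ ω‖^r := Real.rpow_nonneg (norm_nonneg _) r
      have herr : r * δ * (2 + N (S ω)) + r * (2 + N (S ω)) * δ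
          + C₂ * (r * δ * (2 + N (ξ ω)))
          ≤ ε * C₅ * (1 + ‖S ω‖^r + ‖ξ ω‖^r) := by
        have e1 : r * δ * (2 + N (S ω)) ≤ r * δ * ((2+C) * (1 + ‖S ω‖^r)) :=
          mul_le_mul_of_nonneg_left hS'' (by positivity)
        have e2 : C₂ * (r * δ * (2 + N (ξ ω))) ≤
            C₂ * (r * δ * ((2+C) * (1 + ‖ξ ω‖^r))) := by
          apply mul_le_mul_of_nonneg_left _ hC₂0.le
          exact mul_le_mul_of_nonneg_left hξ'' (by positivity)
        have e3 : r * δ * ((2+C) * (1 + ‖S ω‖^r)) * 2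
            + C₂ * (r * δ * ((2+C) * (1 + ‖ξ ω‖^r)))
            ≤ ε * C₅ * (1 + ‖S ω‖^r + ‖ξ ω‖^r) := by
          rw [hδ, hC₅]
          have expand : r * (C * ε) * ((2+C) * (1 + ‖S ω‖^r)) * 2
              + C₂ * (r * (C * ε) * ((2+C) * (1 + ‖ξ ω‖^r)))
              = ε * (r * C * (2+C)) * (2 * (1 + ‖S ω‖^r) + C₂ * (1 + ‖ξ ω‖^r)) := by
            ring
          rw [expand]
          have inner : 2 * (1 + ‖S ω‖^r) + C₂ * (1 + ‖ξ ω‖^r)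
              ≤ (2 + C₂) * (1 + ‖S ω‖^r + ‖ξ ω‖^r) := by nlinarith
          have houter : 0 ≤ ε * (r * C * (2+C)) := by positivity
          calc ε * (r * C * (2+C)) * (2 * (1 + ‖S ω‖^r) + C₂ * (1 + ‖ξ ω‖^r))
              ≤ ε * (r * C * (2+C)) * ((2 + C₂) * (1 + ‖S ω‖^r + ‖ξ ω‖^r)) :=
                mul_le_mul_of_nonneg_left inner houter
            _ = ε * (r * C * (2 + C) * (2 + C₂)) * (1 + ‖S ω‖^r + ‖ξ ω‖^r) := by ring
        linarith
      calc N (S ω + ξ ω) ^ r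
          ≤ N x ^ r + f j (h + ξ ω) + C₂ * N (h + ξ ω) ^ r := main0
        _ = N x ^ r + f j h + f j (ξ ω) + C₂ * N (h + ξ ω) ^ r := by
            rw [hfadd]; ring
        _ ≤ (N (S ω) ^ r + r * δ * (2 + N (S ω)))
            + (r * (2 + N (S ω)) * δ) + f j (ξ ω)
            + C₂ * (N (ξ ω) ^ r + r * δ * (2 + N (ξ ω))) := by
            have := mul_le_mul_of_nonneg_left h3r hC₂0.le
            linarith
        _ ≤ (N (S ω) ^ r + C₂ * N (ξ ω) ^ r
            + ε * C₅ * (1 + ‖S ω‖^r + ‖ξ ω‖^r)) + f j (ξ ω) := by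
            nlinarith [herr]
    -- integrate over the partition
    set Gfun : Ω → ℝ := fun ω => N (S ω) ^ r + C₂ * N (ξ ω) ^ r
        + ε * C₅ * (1 + ‖S ω‖^r + ‖ξ ω‖^r) with hGfun
    have hGint : Integrable Gfun μ :=
      (hψS.add (hψξ.const_mul C₂)).add (hErr.const_mul (ε * C₅))
    have hAmeasΩ : ∀ j, MeasurableSet (A j) := fun j => h𝓖 _ (hAmeas j)
    have hsumL : HasSum (fun j => ∫ ω in A j, N (S ω + ξ ω) ^ r ∂μ)
        (∫ ω, N (S ω + ξ ω) ^ r ∂μ) := by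
      have := hasSum_integral_iUnion hAmeasΩ hAdisj
        (hψf.integrableOn.mono_set (by rw [hAcover]))
      rwa [hAcover, Measure.restrict_univ] at this
    have hsumR : HasSum (fun j => ∫ ω in A j, Gfun ω ∂μ) (∫ ω, Gfun ω ∂μ) := by
      have := hasSum_integral_iUnion hAmeasΩ hAdisj
        (hGint.integrableOn.mono_set (by rw [hAcover]))
      rwa [hAcover, Measure.restrict_univ] at this
    have hperj : ∀ j, ∫ ω in A j, N (S ω + ξ ω) ^ r ∂μ ≤ ∫ ω in A j, Gfun ω ∂μ := by
      intro j
      have hfjint : Integrable (fun ω => f j (ξ ω)) μ :=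
        (f j).integrable_comp hξi
      have h1 : ∫ ω in A j, N (S ω + ξ ω) ^ r ∂μ
          ≤ ∫ ω in A j, (Gfun ω + f j (ξ ω)) ∂μ := by
        apply setIntegral_mono_on hψf.integrableOn
          (hGint.add hfjint).integrableOn (hAmeasΩ j)
        intro ω hω
        exact hptwise j ω hω
      have h2 : ∫ ω in A j, (Gfun ω + f j (ξ ω)) ∂μ
          = ∫ ω in A j, Gfun ω ∂μ + ∫ ω in A j, f j (ξ ω) ∂μ :=
        integral_add hGint.integrableOn hfjint.integrableOn
      have h3 : ∫ ω in A j, f j (ξ ω) ∂μ = 0 := by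
        have h4 : ∫ ω in A j, f j (ξ ω) ∂μ = f j (∫ ω in A j, ξ ω ∂μ) :=
          (f j).integral_comp_comm hξi.integrableOn
        have h5 : ∫ ω in A j, ξ ω ∂μ = 0 := by
          rw [← setIntegral_condExp h𝓖 hξi (hAmeas j)]
          rw [setIntegral_congr_ae (hAmeasΩ j) (hcond.mono fun ω hω _ => hω)]
          simp
        rw [h4, h5]
        simp
      rw [h2, h3, add_zero] at h1
      exact h1
    have hts : ∫ ω, N (S ω + ξ ω) ^ r ∂μ ≤ ∫ ω, Gfun ω ∂μ := by
      rw [← hsumL.tsum_eq, ← hsumR.tsum_eq]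
      exact Summable.tsum_le_tsum hperj hsumL.summable hsumR.summable
    have hGval : ∫ ω, Gfun ω ∂μ = ∫ ω, N (S ω) ^ r ∂μ
        + C₂ * ∫ ω, N (ξ ω) ^ r ∂μ + ε * C₅ * M := by
      have i1 : Integrable (fun ω => N (S ω) ^ r + C₂ * N (ξ ω) ^ r) μ :=
        hψS.add (hψξ.const_mul C₂)
      have i2 : Integrable (fun ω => ε * C₅ * (1 + ‖S ω‖^r + ‖ξ ω‖^r)) μ :=
        hErr.const_mul _
      rw [hGfun, hM]
      rw [integral_add i1 i2, integral_add hψS (hψξ.const_mul C₂),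
        integral_const_mul, integral_const_mul]
    rw [hGval] at hts
    exact hts
  -- let ε → 0
  apply le_of_forall_pos_le_add
  intro η hη
  have hden : 0 < C₅ * M + 1 := by nlinarith
  set ε := min (min 1 (1/C)) (η / (C₅ * M + 1)) with hε
  have hε0 : 0 < ε := by
    apply lt_min (lt_min one_pos (by positivity))
    positivity
  have hε1 : ε ≤ 1 := le_trans (min_le_left _ _) (min_le_left _ _)
  have hεC : C * ε ≤ 1 := by
    have h1 : ε ≤ 1/C := le_trans (min_le_left _ _) (min_le_right _ _)
    rw [le_div_iff₀ hC] at h1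
    linarith [h1]
  have := main ε hε0 hε1 hεC
  have herr2 : ε * C₅ * M ≤ η := by
    have h1 : ε ≤ η / (C₅ * M + 1) := min_le_right _ _
    have h2 : ε * (C₅ * M + 1) ≤ η := by
      rw [div_eq_mul_inv] at h1
      calc ε * (C₅ * M + 1) ≤ η / (C₅ * M + 1) * (C₅ * M + 1) :=
            mul_le_mul_of_nonneg_right h1 hden.le
        _ = η := div_mul_cancel₀ η hden.ne'
    nlinarith [mul_nonneg (mul_nonneg hε0.le hC₅0.le) hM0]
  linarith

end RSM

/-- In an `r`-smooth separable Banach space there is `D ≥ 1` with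
`E‖ξ_1 + ⋯ + ξ_n‖^r ≤ D ∑ E‖ξ_i‖^r` for all martingale difference sequences. -/
theorem rsmooth_martingale_inequality
    {B : Type*} [NormedAddCommGroup B] [NormedSpace ℝ B] [CompleteSpace B]
    [TopologicalSpace.SeparableSpace B]
    (r : ℝ) (hr1 : 1 < r) (hr2 : r ≤ 2) (hsm : RSmooth B r) :
    ∃ D : ℝ≥0∞, 1 ≤ D ∧ D ≠ ⊤ ∧
      ∀ (Ω : Type) (mΩ : MeasurableSpace Ω) (μ : Measure Ω), IsProbabilityMeasure μ →
      ∀ (𝓕 : ℕ → MeasurableSpace Ω), Monotone 𝓕 → (∀ i, 𝓕 i ≤ mΩ) →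
      ∀ (ξ : ℕ → Ω → B) (n : ℕ),
        (∀ i, StronglyMeasurable[𝓕 i] (ξ i)) →
        (∀ i, Integrable (ξ i) μ) →
        (∀ i, 1 ≤ i → μ[ξ i | 𝓕 (i - 1)] =ᵐ[μ] 0) →
        ∫⁻ ω, (‖∑ i ∈ Finset.Icc 1 n, ξ i ω‖₊ : ℝ≥0∞) ^ r ∂μ
          ≤ D * ∑ i ∈ Finset.Icc 1 n, ∫⁻ ω, (‖ξ i ω‖₊ : ℝ≥0∞) ^ r ∂μ := by
  classical
  have hr0 : (0:ℝ) < r := by linarith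
  obtain ⟨N, hadd, hsmul, ⟨c, C0, hc, hb⟩, K0, hK⟩ := hsm
  set C := max C0 1 with hCdef
  have hC : (0:ℝ) < C := lt_of_lt_of_le one_pos (le_max_right _ _)
  have hlow : ∀ x, c * ‖x‖ ≤ N x := fun x => (hb x).1
  have hup : ∀ x, N x ≤ C * ‖x‖ := fun x =>
    le_trans (hb x).2 (mul_le_mul_of_nonneg_right (le_max_left _ _) (norm_nonneg x))
  set K := max K0 0 with hKdef
  have hK0 : (0:ℝ) ≤ K := le_max_right _ _
  have hK' : ∀ t : ℝ, 0 < t → ∀ x y : B, N x = 1 → N y = 1 →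
      N (x + t • y) + N (x - t • y) - 2 ≤ K * t ^ r := by
    intro t ht x y hx hy
    calc N (x + t • y) + N (x - t • y) - 2 ≤ K0 * t ^ r := hK t ht x y hx hy
      _ ≤ K * t ^ r := mul_le_mul_of_nonneg_right (le_max_left _ _)
          (Real.rpow_nonneg ht.le r)
  have hnn : ∀ z : B, 0 ≤ N z := fun z =>
    le_trans (mul_nonneg hc.le (norm_nonneg z)) (hlow z)
  have hN0 : N (0:B) = 0 := by simpa using hsmul 0 0
  set C₂ := r*K + (1+K)^2 + r + 4 with hC₂
  have hC₂0 : (0:ℝ) < C₂ := by nlinarith [sq_nonneg (1+K)]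
  set Cr := C₂ * (C ^ r) / (c ^ r) with hCr
  have hcr0 : (0:ℝ) < c ^ r := Real.rpow_pos_of_pos hc r
  have hCr0 : (0:ℝ) < Cr := by
    have : (0:ℝ) < C ^ r := Real.rpow_pos_of_pos hC r
    positivity
  refine ⟨max (ENNReal.ofReal Cr) 1, le_max_right _ _, ?_, ?_⟩
  · simp [ne_eq, max_eq_top, ENNReal.ofReal_ne_top]
  intro Ω mΩ μ hprob 𝓕 hmono h𝓕 ξ n hmeasξ hintξ hcond
  haveI := hprob
  by_cases hfin : ∀ i ∈ Finset.Icc 1 n, ∫⁻ ω, ((‖ξ i ω‖₊ : ℝ≥0∞)) ^ r ∂μ ≠ ⊤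
  swap
  · push_neg at hfin
    obtain ⟨i, hi, htop⟩ := hfin
    have hsum : ∑ i ∈ Finset.Icc 1 n, ∫⁻ ω, ((‖ξ i ω‖₊ : ℝ≥0∞)) ^ r ∂μ = ⊤ :=
      ENNReal.sum_eq_top.2 ⟨i, hi, htop⟩
    rw [hsum, ENNReal.mul_top]
    · exact le_top
    · exact ((zero_lt_one.trans_le (le_max_right _ _)).ne')
  -- pointwise conversion lemma
  have hconv : ∀ x : B, ((‖x‖₊ : ℝ≥0∞)) ^ r = ENNReal.ofReal (‖x‖ ^ r) := by
    intro x
    rw [← enorm_eq_nnnorm, ← ofReal_norm, ← ENNReal.ofReal_rpow_of_nonneg (norm_nonneg x) hr0.le]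
  have hξam : ∀ i, AEStronglyMeasurable (ξ i) μ :=
    fun i => ((hmeasξ i).mono (h𝓕 i)).aestronglyMeasurable
  have hrm : ∀ (f : Ω → B), AEStronglyMeasurable f μ →
      AEStronglyMeasurable (fun ω => ‖f ω‖ ^ r) μ := by
    intro f hf
    exact ((Real.continuous_rpow_const hr0.le).comp continuous_norm).comp_aestronglyMeasurable hf
  -- integrability of the r-th powers of the ξ i
  have hξr : ∀ i ∈ Finset.Icc 1 n, Integrable (fun ω => ‖ξ i ω‖ ^ r) μ := by
    intro i hi
    refine ⟨hrm _ (hξam i), ?_⟩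
    rw [HasFiniteIntegral]
    have heq : ∀ ω, (‖(‖ξ i ω‖ ^ r)‖₊ : ℝ≥0∞) = ((‖ξ i ω‖₊ : ℝ≥0∞)) ^ r := by
      intro ω
      rw [hconv, ← enorm_eq_nnnorm, ← ofReal_norm,
        Real.norm_of_nonneg (Real.rpow_nonneg (norm_nonneg _) r)]
    calc ∫⁻ ω, (‖(‖ξ i ω‖ ^ r)‖₊ : ℝ≥0∞) ∂μ
        = ∫⁻ ω, ((‖ξ i ω‖₊ : ℝ≥0∞)) ^ r ∂μ := lintegral_congr heq
      _ < ⊤ := lt_top_iff_ne_top.2 (hfin i hi)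
  -- the inductive claim
  have claim : ∀ k, k ≤ n →
      Integrable (fun ω => ‖∑ i ∈ Finset.Icc 1 k, ξ i ω‖ ^ r) μ ∧
      ∫ ω, N (∑ i ∈ Finset.Icc 1 k, ξ i ω) ^ r ∂μ ≤
        C₂ * ∑ i ∈ Finset.Icc 1 k, ∫ ω, N (ξ i ω) ^ r ∂μ := by
    intro k
    induction k with
    | zero =>
      intro _
      have hempty : Finset.Icc 1 0 = (∅ : Finset ℕ) := by
        apply Finset.Icc_eq_empty
        omega
      rw [hempty]
      simp only [Finset.sum_empty]
      constructor
      · rw [norm_zero, Real.zero_rpow hr0.ne']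
        exact integrable_const 0
      · rw [hN0, Real.zero_rpow hr0.ne']
        simp
    | succ k ih =>
      intro hk1
      obtain ⟨ihint, ihbound⟩ := ih (by omega)
      have hsum : ∀ ω, ∑ i ∈ Finset.Icc 1 (k+1), ξ i ω
          = (∑ i ∈ Finset.Icc 1 k, ξ i ω) + ξ (k+1) ω := by
        intro ω
        exact Finset.sum_Icc_succ_top (by omega) _
      set S : Ω → B := fun ω => ∑ i ∈ Finset.Icc 1 k, ξ i ω with hS
      have hSsm : StronglyMeasurable[𝓕 k] S := by
        apply Finset.stronglyMeasurable_fun_sum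
        intro i hi
        have : i ≤ k := (Finset.mem_Icc.1 hi).2
        exact (hmeasξ i).mono (hmono this)
      have hSm : AEStronglyMeasurable S μ := ((hSsm).mono (h𝓕 k)).aestronglyMeasurable
      have hk1n : k + 1 ∈ Finset.Icc 1 n := Finset.mem_Icc.2 ⟨by omega, hk1⟩
      have hξk1r : Integrable (fun ω => ‖ξ (k+1) ω‖ ^ r) μ := hξr _ hk1n
      have hcondk : μ[ξ (k+1) | 𝓕 k] =ᵐ[μ] 0 := by
        have := hcond (k+1) (by omega)
        simpa using this
      have hstep := RSM.step hr1 hr2 N hadd hsmul hc hC hlow hup hK0 hK'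
        (h𝓕 k) hSsm (hξam (k+1)) (hintξ (k+1)) ihint hξk1r hcondk
      -- integrability of the new sum
      have hnewint : Integrable (fun ω => ‖∑ i ∈ Finset.Icc 1 (k+1), ξ i ω‖ ^ r) μ := by
        have hmeass : AEStronglyMeasurable (fun ω => S ω + ξ (k+1) ω) μ :=
          hSm.add (hξam (k+1))
        apply Integrable.mono' ((ihint.add hξk1r).const_mul (2^r))
          (by
            have := hrm _ hmeass
            apply this.congr
            filter_upwards with ω
            rw [hsum ω])
        filter_upwards with ω
        rw [hsum ω]
        rw [Real.norm_of_nonneg (Real.rpow_nonneg (norm_nonneg _) r)]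
        calc ‖S ω + ξ (k+1) ω‖^r ≤ (‖S ω‖ + ‖ξ (k+1) ω‖)^r :=
              Real.rpow_le_rpow (norm_nonneg _) (norm_add_le _ _) hr0.le
          _ ≤ 2^r * (‖S ω‖^r + ‖ξ (k+1) ω‖^r) :=
              RSM.add_rpow_le hr1 (norm_nonneg _) (norm_nonneg _)
      refine ⟨hnewint, ?_⟩
      have heqint : ∫ ω, N (∑ i ∈ Finset.Icc 1 (k+1), ξ i ω) ^ r ∂μ
          = ∫ ω, N (S ω + ξ (k+1) ω) ^ r ∂μ := by
        apply integral_congr_ae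
        filter_upwards with ω
        rw [hsum ω]
      rw [heqint]
      have hsum2 : ∑ i ∈ Finset.Icc 1 (k+1), ∫ ω, N (ξ i ω) ^ r ∂μ
          = (∑ i ∈ Finset.Icc 1 k, ∫ ω, N (ξ i ω) ^ r ∂μ) + ∫ ω, N (ξ (k+1) ω) ^ r ∂μ :=
        Finset.sum_Icc_succ_top (by omega) _
      rw [hsum2, mul_add]
      calc ∫ ω, N (S ω + ξ (k+1) ω) ^ r ∂μ
          ≤ ∫ ω, N (S ω) ^ r ∂μ + C₂ * ∫ ω, N (ξ (k+1) ω) ^ r ∂μ := hstep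
        _ ≤ C₂ * (∑ i ∈ Finset.Icc 1 k, ∫ ω, N (ξ i ω) ^ r ∂μ)
            + C₂ * ∫ ω, N (ξ (k+1) ω) ^ r ∂μ := by linarith
  obtain ⟨hSnint, hSnbound⟩ := claim n le_rfl
  -- comparison of ψ-integrals with norm-integrals
  set S : Ω → B := fun ω => ∑ i ∈ Finset.Icc 1 n, ξ i ω with hSdef
  have hSm : AEStronglyMeasurable S μ := by
    apply Finset.aestronglyMeasurable_fun_sum
    intro i hi
    exact hξam i
  have hψint : ∀ (f : Ω → B), AEStronglyMeasurable f μ →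
      Integrable (fun ω => ‖f ω‖ ^ r) μ →
      Integrable (fun ω => N (f ω) ^ r) μ := by
    intro f hf hfr
    have hNcont : Continuous N := by
      have hNlip : ∀ x y : B, N x ≤ N y + C * ‖x - y‖ := by
        intro x y
        calc N x = N (y + (x - y)) := by rw [show y + (x - y) = x by abel]
          _ ≤ N y + N (x - y) := hadd _ _
          _ ≤ N y + C * ‖x - y‖ := by linarith [hup (x-y)]
      have : LipschitzWith (Real.toNNReal C) N := by
        apply LipschitzWith.of_dist_le_mul
        intro x y
        rw [Real.dist_eq, Real.coe_toNNReal _ hC.le, dist_eq_norm, abs_le]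
        have h2 : ‖y - x‖ = ‖x - y‖ := norm_sub_rev y x
        constructor
        · linarith [h2 ▸ (hNlip y x)]
        · linarith [hNlip x y]
      exact this.continuous
    apply Integrable.mono' (hfr.const_mul (C^r))
      (((Real.continuous_rpow_const hr0.le).comp hNcont).comp_aestronglyMeasurable hf)
    filter_upwards with ω
    show ‖N (f ω) ^ r‖ ≤ C^r * ‖f ω‖^r
    rw [Real.norm_of_nonneg (Real.rpow_nonneg (hnn (f ω)) r)]
    calc N (f ω) ^ r ≤ (C * ‖f ω‖) ^ r :=
          Real.rpow_le_rpow (hnn _) (hup _) hr0.le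
      _ = C^r * ‖f ω‖^r := Real.mul_rpow hC.le (norm_nonneg _)
  have hψS : Integrable (fun ω => N (S ω) ^ r) μ := hψint _ hSm hSnint
  -- real-valued final bound
  have hreal : ∫ ω, ‖S ω‖ ^ r ∂μ ≤ Cr * ∑ i ∈ Finset.Icc 1 n, ∫ ω, ‖ξ i ω‖ ^ r ∂μ := by
    have h1 : c^r * ∫ ω, ‖S ω‖ ^ r ∂μ ≤ ∫ ω, N (S ω) ^ r ∂μ := by
      rw [← integral_const_mul]
      apply integral_mono (hSnint.const_mul _) hψS
      intro ω
      calc c^r * ‖S ω‖^r = (c * ‖S ω‖)^r := (Real.mul_rpow hc.le (norm_nonneg _)).symm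
        _ ≤ N (S ω) ^ r := Real.rpow_le_rpow (by positivity) (hlow _) hr0.le
    have h2 : ∀ i ∈ Finset.Icc 1 n, ∫ ω, N (ξ i ω) ^ r ∂μ ≤ C^r * ∫ ω, ‖ξ i ω‖ ^ r ∂μ := by
      intro i hi
      rw [← integral_const_mul]
      apply integral_mono (hψint _ (hξam i) (hξr i hi)) ((hξr i hi).const_mul _)
      intro ω
      calc N (ξ i ω) ^ r ≤ (C * ‖ξ i ω‖)^r :=
            Real.rpow_le_rpow (hnn _) (hup _) hr0.le
        _ = C^r * ‖ξ i ω‖^r := Real.mul_rpow hC.le (norm_nonneg _)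
    have h3 : ∑ i ∈ Finset.Icc 1 n, ∫ ω, N (ξ i ω) ^ r ∂μ
        ≤ C^r * ∑ i ∈ Finset.Icc 1 n, ∫ ω, ‖ξ i ω‖ ^ r ∂μ := by
      rw [Finset.mul_sum]
      exact Finset.sum_le_sum h2
    have h4 : ∫ ω, N (S ω) ^ r ∂μ ≤ C₂ * (C^r * ∑ i ∈ Finset.Icc 1 n, ∫ ω, ‖ξ i ω‖ ^ r ∂μ) :=
      le_trans hSnbound (mul_le_mul_of_nonneg_left h3 hC₂0.le)
    rw [hCr]
    rw [div_mul_eq_mul_div, le_div_iff₀ hcr0]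
    calc (∫ ω, ‖S ω‖ ^ r ∂μ) * c^r = c^r * ∫ ω, ‖S ω‖ ^ r ∂μ := by ring
      _ ≤ ∫ ω, N (S ω) ^ r ∂μ := h1
      _ ≤ C₂ * (C^r * ∑ i ∈ Finset.Icc 1 n, ∫ ω, ‖ξ i ω‖ ^ r ∂μ) := h4
      _ = C₂ * C^r * ∑ i ∈ Finset.Icc 1 n, ∫ ω, ‖ξ i ω‖ ^ r ∂μ := by ring
  -- translate into the ℝ≥0∞ statement
  have hLHS : ∫⁻ ω, ((‖S ω‖₊ : ℝ≥0∞)) ^ r ∂μ = ENNReal.ofReal (∫ ω, ‖S ω‖ ^ r ∂μ) := by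
    rw [ofReal_integral_eq_lintegral_ofReal hSnint
      (Filter.Eventually.of_forall fun ω => Real.rpow_nonneg (norm_nonneg _) r)]
    exact lintegral_congr fun ω => hconv (S ω)
  have hRHSi : ∀ i ∈ Finset.Icc 1 n, ∫⁻ ω, ((‖ξ i ω‖₊ : ℝ≥0∞)) ^ r ∂μ
      = ENNReal.ofReal (∫ ω, ‖ξ i ω‖ ^ r ∂μ) := by
    intro i hi
    rw [ofReal_integral_eq_lintegral_ofReal (hξr i hi)
      (Filter.Eventually.of_forall fun ω => Real.rpow_nonneg (norm_nonneg _) r)]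
    exact lintegral_congr fun ω => hconv (ξ i ω)
  calc ∫⁻ ω, ((‖∑ i ∈ Finset.Icc 1 n, ξ i ω‖₊ : ℝ≥0∞)) ^ r ∂μ
      = ENNReal.ofReal (∫ ω, ‖S ω‖ ^ r ∂μ) := hLHS
    _ ≤ ENNReal.ofReal (Cr * ∑ i ∈ Finset.Icc 1 n, ∫ ω, ‖ξ i ω‖ ^ r ∂μ) :=
        ENNReal.ofReal_le_ofReal hreal
    _ = ENNReal.ofReal Cr * ENNReal.ofReal (∑ i ∈ Finset.Icc 1 n, ∫ ω, ‖ξ i ω‖ ^ r ∂μ) :=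
        ENNReal.ofReal_mul hCr0.le
    _ = ENNReal.ofReal Cr * ∑ i ∈ Finset.Icc 1 n,
          ENNReal.ofReal (∫ ω, ‖ξ i ω‖ ^ r ∂μ) := by
        rw [ENNReal.ofReal_sum_of_nonneg]
        intro i hi
        exact integral_nonneg fun ω => Real.rpow_nonneg (norm_nonneg _) r
    _ = ENNReal.ofReal Cr * ∑ i ∈ Finset.Icc 1 n,
          ∫⁻ ω, ((‖ξ i ω‖₊ : ℝ≥0∞)) ^ r ∂μ := by
        congr 1
        exact (Finset.sum_congr rfl hRHSi).symm
    _ ≤ max (ENNReal.ofReal Cr) 1 * ∑ i ∈ Finset.Icc 1 n,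
          ∫⁻ ω, ((‖ξ i ω‖₊ : ℝ≥0∞)) ^ r ∂μ :=
        mul_le_mul_left (le_max_left _ _) _
end
end
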